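/- The determinant of the principal symbol is det p₁ = 4·α·μⁿ·((λ+μ)/(λ+3μ))·s^{n+1}, where p₁ := [[μs·I_{n−1} + (μ(λ+μ)/((λ+3μ)s))·ξ♯ξᵀ, −(2iμ²/(λ+3μ))·ξ♯, 0], [(2iμ²/(λ+3μ))·ξᵀ, (2μ(λ+2μ)/(λ+3μ))·s, 0], [0, 0, αs]]. In particular p₁ is invertible if and only if λ + μ ≠ 0. -/

import Mathlib

noncomputable section

open Matrix

/-- Block matrix `[[T, col, 0], [row, d, 0], [0, 0, e]]` of size `(n+1) × (n+1)`,
with blocks of sizes `n-1, 1, 1`. -/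
def blk (n : ℕ) (T : Fin (n-1) → Fin (n-1) → ℂ) (colv rowv : Fin (n-1) → ℂ)
    (d e : ℂ) : Matrix (Fin (n+1)) (Fin (n+1)) ℂ :=
  Matrix.of fun i j =>
    if hi : (i : ℕ) < n - 1 then
      if hj : (j : ℕ) < n - 1 then T ⟨i, hi⟩ ⟨j, hj⟩
      else if (j : ℕ) = n - 1 then colv ⟨i, hi⟩ else 0
    else if (i : ℕ) = n - 1 then
      if hj : (j : ℕ) < n - 1 then rowv ⟨j, hj⟩
      else if (j : ℕ) = n - 1 then d else 0
    else if (j : ℕ) = n then e else 0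

/-- The matrix `F₁ = [[(1/s)ξ♯ξᵀ, i ξ♯, 0], [i ξᵀ, −s, 0], [0, 0, 0]]`. -/
def F1mat (n : ℕ) (ξ ξs : Fin (n-1) → ℝ) (s : ℝ) :
    Matrix (Fin (n+1)) (Fin (n+1)) ℂ :=
  blk n (fun a b => ((1 / s * ξs a * ξ b : ℝ) : ℂ))
    (fun a => Complex.I * ((ξs a : ℝ) : ℂ))
    (fun b => Complex.I * ((ξ b : ℝ) : ℂ))
    ((-s : ℝ) : ℂ) 0

/-- The matrix `F₂ = [[(1/s)ξ♯ξᵀ, −i((λ+2μ)/μ) ξ♯, 0], [−i(μ/(λ+2μ)) ξᵀ, −s, 0], [0, 0, 0]]`. -/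
def F2mat (n : ℕ) (ξ ξs : Fin (n-1) → ℝ) (s lam mu : ℝ) :
    Matrix (Fin (n+1)) (Fin (n+1)) ℂ :=
  blk n (fun a b => ((1 / s * ξs a * ξ b : ℝ) : ℂ))
    (fun a => -(Complex.I * (((lam + 2*mu)/mu * ξs a : ℝ) : ℂ)))
    (fun b => -(Complex.I * ((mu/(lam + 2*mu) * ξ b : ℝ) : ℂ)))
    ((-s : ℝ) : ℂ) 0

/-- `b₁ = i(λ+μ)·[[0, (1/μ) ξ♯, 0], [(1/(λ+2μ)) ξᵀ, 0, 0], [0, 0, 0]]`. -/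
def b1mat (n : ℕ) (ξ ξs : Fin (n-1) → ℝ) (lam mu : ℝ) :
    Matrix (Fin (n+1)) (Fin (n+1)) ℂ :=
  (Complex.I * ((lam + mu : ℝ) : ℂ)) •
    blk n (fun _ _ => 0)
      (fun a => ((1/mu * ξs a : ℝ) : ℂ))
      (fun b => ((1/(lam + 2*mu) * ξ b : ℝ) : ℂ)) 0 0

/-- `c₂ = −[[s²·I + ((λ+μ)/μ) ξ♯ξᵀ, 0, 0], [0, (μ/(λ+2μ)) s², 0], [0, 0, s²]]`. -/
def c2mat (n : ℕ) (ξ ξs : Fin (n-1) → ℝ) (s lam mu : ℝ) :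
    Matrix (Fin (n+1)) (Fin (n+1)) ℂ :=
  -(blk n
      (fun a b => ((s^2 * (if a = b then 1 else 0) + (lam + mu)/mu * ξs a * ξ b : ℝ) : ℂ))
      (fun _ => 0) (fun _ => 0)
      ((mu/(lam + 2*mu) * s^2 : ℝ) : ℂ) ((s^2 : ℝ) : ℂ))

/-- The principal symbol `p₁` of the thermoelastic Dirichlet-to-Neumann map. -/
def p1mat (n : ℕ) (ξ ξs : Fin (n-1) → ℝ) (s lam mu al : ℝ) :
    Matrix (Fin (n+1)) (Fin (n+1)) ℂ :=
  blk n
    (fun a b => ((mu * s * (if a = b then 1 else 0)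
        + mu * (lam + mu)/((lam + 3*mu) * s) * ξs a * ξ b : ℝ) : ℂ))
    (fun a => -(Complex.I * ((2 * mu^2/(lam + 3*mu) * ξs a : ℝ) : ℂ)))
    (fun b => Complex.I * ((2 * mu^2/(lam + 3*mu) * ξ b : ℝ) : ℂ))
    ((2 * mu * (lam + 2*mu)/(lam + 3*mu) * s : ℝ) : ℂ)
    ((al * s : ℝ) : ℂ)

/-- `A = blockdiag(μ·I, λ+2μ, α)`. -/
def Amat (n : ℕ) (lam mu al : ℝ) : Matrix (Fin (n+1)) (Fin (n+1)) ℂ :=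
  blk n (fun a b => if a = b then ((mu : ℝ) : ℂ) else 0)
    (fun _ => 0) (fun _ => 0) ((lam + 2*mu : ℝ) : ℂ) ((al : ℝ) : ℂ)

/-- `d₁ = [[0, iμ ξ♯, 0], [iλ ξᵀ, 0, 0], [0, 0, 0]]`. -/
def d1mat (n : ℕ) (ξ ξs : Fin (n-1) → ℝ) (lam mu : ℝ) :
    Matrix (Fin (n+1)) (Fin (n+1)) ℂ :=
  blk n (fun _ _ => 0)
    (fun a => Complex.I * ((mu * ξs a : ℝ) : ℂ))
    (fun b => Complex.I * ((lam * ξ b : ℝ) : ℂ)) 0 0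

/-- `W = blockdiag(G⁻¹, 1, 1)`. -/
def Wmat (n : ℕ) (G : Matrix (Fin (n-1)) (Fin (n-1)) ℝ) :
    Matrix (Fin (n+1)) (Fin (n+1)) ℂ :=
  blk n (fun a b => ((G⁻¹ a b : ℝ) : ℂ)) (fun _ => 0) (fun _ => 0) 1 1

def sumEquiv (m : ℕ) : Fin (m+3) ≃ (Fin (m+1)) ⊕ (Fin 2) where
  toFun i := if h : (i:ℕ) < m+1 then Sum.inl ⟨i, h⟩ else Sum.inr ⟨(i:ℕ) - (m+1), by omega⟩
  invFun x := match x with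
    | Sum.inl a => ⟨(a:ℕ), by omega⟩
    | Sum.inr b => ⟨m+1+(b:ℕ), by omega⟩
  left_inv i := by
    by_cases h : (i:ℕ) < m+1
    · simp [h]
    · simp only [dif_neg h]
      apply Fin.ext
      simp
      omega
  right_inv x := by
    rcases x with a | b
    · simp [a.isLt]
    · have hb := b.isLt
      dsimp only
      rw [dif_neg (by omega)]
      congr 1
      apply Fin.ext
      simp

lemma sumEquiv_symm_inl (m : ℕ) (a : Fin (m+1)) :
    ((sumEquiv m).symm (Sum.inl a) : ℕ) = (a : ℕ) := by rfl

lemma sumEquiv_symm_inr (m : ℕ) (b : Fin 2) :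
    ((sumEquiv m).symm (Sum.inr b) : ℕ) = m + 1 + (b : ℕ) := by rfl

lemma blk_eq (m : ℕ) (T : Fin (m+1) → Fin (m+1) → ℂ) (colv rowv : Fin (m+1) → ℂ)
    (d e : ℂ) :
    (blk (m+2) T colv rowv d e).submatrix (sumEquiv m).symm (sumEquiv m).symm
      = Matrix.fromBlocks (Matrix.of T)
          (Matrix.of fun a (j : Fin 2) => if j = 0 then colv a else 0)
          (Matrix.of fun (j : Fin 2) b => if j = 0 then rowv b else 0)
          !![d, 0; 0, e] := by
  ext x y
  rcases x with a | b <;> rcases y with a' | b'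
  · have ha := a.isLt; have ha' := a'.isLt
    simp only [Matrix.submatrix_apply, blk, Matrix.of_apply, fromBlocks_apply₁₁,
      sumEquiv_symm_inl]
    split_ifs <;> first | rfl | omega
  · have ha := a.isLt
    fin_cases b' <;>
      simp only [Matrix.submatrix_apply, blk, Matrix.of_apply, fromBlocks_apply₁₂,
        sumEquiv_symm_inl, sumEquiv_symm_inr, Fin.mk_zero, Fin.mk_one, Fin.val_zero,
        Fin.val_one, Fin.isValue] <;>
      split_ifs <;> first | rfl | omega
  · have ha' := a'.isLt
    fin_cases b <;>
      simp only [Matrix.submatrix_apply, blk, Matrix.of_apply, fromBlocks_apply₂₁,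
        sumEquiv_symm_inl, sumEquiv_symm_inr, Fin.mk_zero, Fin.mk_one, Fin.val_zero,
        Fin.val_one, Fin.isValue] <;>
      split_ifs <;> first | rfl | omega
  · fin_cases b <;> fin_cases b' <;>
      simp only [Matrix.submatrix_apply, blk, Matrix.of_apply, fromBlocks_apply₂₂,
        sumEquiv_symm_inr, Fin.mk_zero, Fin.mk_one, Fin.val_zero, Fin.val_one, Fin.isValue,
        Matrix.cons_val_zero, Matrix.cons_val_one, Matrix.head_cons, Matrix.cons_val',
        Matrix.head_fin_const, Matrix.empty_val'] <;>
      split_ifs <;> first | rfl | omega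

/-- det p₁ = 4αμⁿ((λ+μ)/(λ+3μ))s^(n+1); p₁ invertible iff λ + μ ≠ 0. -/
theorem stmt13 (n : ℕ) (hn : 2 ≤ n)
    (G : Matrix (Fin (n-1)) (Fin (n-1)) ℝ) (hG : G.PosDef)
    (ξ : Fin (n-1) → ℝ) (hξ : ξ ≠ 0)
    (ξs : Fin (n-1) → ℝ) (hξs : ξs = G.mulVec ξ)
    (s : ℝ) (hs : s = Real.sqrt (ξ ⬝ᵥ G.mulVec ξ))
    (lam mu : ℝ) (hmu : 0 < mu) (hlm : 0 ≤ lam + mu)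
    (c : ℝ) (hc : c = (lam + mu)/(lam + 3*mu)) (al : ℝ) (hal : 0 < al) :
    (p1mat n ξ ξs s lam mu al).det
        = ((4 * al * mu^n * ((lam + mu)/(lam + 3*mu)) * s^(n+1) : ℝ) : ℂ)
    ∧ (IsUnit (p1mat n ξ ξs s lam mu al) ↔ lam + mu ≠ 0) := by
  obtain ⟨m, rfl⟩ : ∃ m, n = m + 2 := ⟨n - 2, by omega⟩
  have h2 : 0 < lam + 2*mu := by linarith
  have h3 : 0 < lam + 3*mu := by linarith
  have hq : 0 < ξ ⬝ᵥ G.mulVec ξ := by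
    have := hG.dotProduct_mulVec_pos hξ
    simpa using this
  have hspos : 0 < s := by rw [hs]; exact Real.sqrt_pos.mpr hq
  have hs2 : s^2 = ξ ⬝ᵥ G.mulVec ξ := by rw [hs]; exact Real.sq_sqrt hq.le
  have hsum : ∑ b, ξ b * ξs b = s^2 := by
    rw [hs2, hξs]; rfl
  -- the block pieces
  set K : ℝ := 2 * mu^2/(lam + 3*mu) with hK
  set d0 : ℝ := 2 * mu * (lam + 2*mu)/(lam + 3*mu) * s with hd0
  have hd0pos : 0 < d0 := by rw [hd0]; positivity
  set T : Matrix (Fin (m+1)) (Fin (m+1)) ℂ := Matrix.of (fun a b =>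
      ((mu * s * (if a = b then 1 else 0)
        + mu * (lam + mu)/((lam + 3*mu) * s) * ξs a * ξ b : ℝ) : ℂ)) with hT
  set B : Matrix (Fin (m+1)) (Fin 2) ℂ := Matrix.of (fun a (j : Fin 2) =>
      if j = 0 then -(Complex.I * ((K * ξs a : ℝ) : ℂ)) else 0) with hB
  set C : Matrix (Fin 2) (Fin (m+1)) ℂ := Matrix.of (fun (j : Fin 2) b =>
      if j = 0 then Complex.I * ((K * ξ b : ℝ) : ℂ) else 0) with hC
  set D : Matrix (Fin 2) (Fin 2) ℂ := !![((d0 : ℝ) : ℂ), 0; 0, ((al * s : ℝ) : ℂ)] with hD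
  have hdet1 : (p1mat (m+2) ξ ξs s lam mu al).det = (Matrix.fromBlocks T B C D).det := by
    rw [← Matrix.det_submatrix_equiv_self (sumEquiv m).symm (p1mat (m+2) ξ ξs s lam mu al)]
    congr 1
    exact blk_eq m _ _ _ _ _

  -- inverse of D
  have hals : (al*s) ≠ 0 := by positivity
  set D' : Matrix (Fin 2) (Fin 2) ℂ := !![((d0⁻¹ : ℝ) : ℂ), 0; 0, (((al*s)⁻¹ : ℝ) : ℂ)] with hD'
  have hd0C : ((d0:ℝ):ℂ) ≠ 0 := Complex.ofReal_ne_zero.mpr hd0pos.ne'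
  have halC : ((al:ℝ):ℂ) ≠ 0 := Complex.ofReal_ne_zero.mpr hal.ne'
  have hsC : ((s:ℝ):ℂ) ≠ 0 := Complex.ofReal_ne_zero.mpr hspos.ne'
  have hDD' : D * D' = 1 := by
    ext i j
    fin_cases i <;> fin_cases j <;>
      simp [hD, hD', Matrix.mul_apply, Fin.sum_univ_two, Matrix.one_apply] <;>
      field_simp <;> ring
  haveI : Invertible D := invertibleOfRightInverse _ _ hDD'
  have hinvD : ⅟D = D' := invOf_eq_right_inv hDD'
  -- B * D' * C
  have hBDC : B * D' * C = Matrix.of (fun a b => ((K^2/d0 * ξs a * ξ b : ℝ) : ℂ)) := by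
    ext a b
    simp [hB, hC, hD', Matrix.mul_apply, Fin.sum_univ_two]
    push_cast
    ring_nf
    simp only [Complex.I_sq]
    ring_nf
  -- Schur complement as rank-one update
  set u : Fin (m+1) → ℂ := fun a => ((ξs a : ℝ) : ℂ) with hu
  set v : Fin (m+1) → ℂ := fun b => ((lam/((lam+2*mu)*s^2) * ξ b : ℝ) : ℂ) with hv
  have hmu' : mu ≠ 0 := hmu.ne'
  have hs' : s ≠ 0 := hspos.ne'
  have h2' : lam + 2*mu ≠ 0 := h2.ne'
  have h3' : lam + 3*mu ≠ 0 := h3.ne'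
  have hSchur : T - B * D' * C
      = ((mu*s : ℝ) : ℂ) • (1 + Matrix.replicateCol Unit u * Matrix.replicateRow Unit v) := by
    rw [hBDC]
    ext a b
    simp only [hT, Matrix.sub_apply, Matrix.smul_apply, Matrix.add_apply, Matrix.one_apply,
      Matrix.mul_apply, Matrix.replicateCol_apply, Matrix.replicateRow_apply, Matrix.of_apply, hu, hv,
      Finset.univ_unique, Finset.sum_const, Finset.card_singleton, one_smul, smul_eq_mul]
    by_cases hab : a = b
    · subst hab
      rw [if_pos rfl, if_pos rfl]
      have key : (mu * s * 1 + mu*(lam+mu)/((lam+3*mu)*s) * ξs a * ξ a) - K^2/d0 * ξs a * ξ a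
          = mu * s * (1 + ξs a * (lam/((lam+2*mu)*s^2) * ξ a)) := by
        rw [hK, hd0]
        field_simp
        have h3'' : lam + mu * 3 ≠ 0 := by rwa [mul_comm mu]
        have h2'' : lam + mu * 2 ≠ 0 := by rwa [mul_comm mu]
        rw [add_sub_assoc]
        congr 1
        rw [div_sub_div _ _ h3'' (mul_ne_zero h3'' h2''), div_eq_div_iff (mul_ne_zero h3'' (mul_ne_zero h3'' h2'')) h2'']
        ring
      exact_mod_cast key
    · rw [if_neg hab, if_neg hab]
      have key : (mu * s * 0 + mu*(lam+mu)/((lam+3*mu)*s) * ξs a * ξ b) - K^2/d0 * ξs a * ξ b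
          = mu * s * (0 + ξs a * (lam/((lam+2*mu)*s^2) * ξ b)) := by
        rw [hK, hd0]
        field_simp
        have h3'' : lam + mu * 3 ≠ 0 := by rwa [mul_comm mu]
        have h2'' : lam + mu * 2 ≠ 0 := by rwa [mul_comm mu]
        rw [add_sub_assoc]
        congr 1
        rw [div_sub_div _ _ h3'' (mul_ne_zero h3'' h2''), div_eq_div_iff (mul_ne_zero h3'' (mul_ne_zero h3'' h2'')) h2'']
        ring
      exact_mod_cast key
  -- determinants
  have hdet2 : (Matrix.fromBlocks T B C D).det = D.det * (T - B * D' * C).det := by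
    rw [Matrix.det_fromBlocks₂₂, hinvD]
  have hdetD : D.det = ((d0 * (al*s) : ℝ) : ℂ) := by
    simp [hD, Matrix.det_fin_two_of]
  have hvu : v ⬝ᵥ u = ((lam/(lam+2*mu) : ℝ) : ℂ) := by
    have hreal : ∑ b, lam/((lam+2*mu)*s^2) * ξ b * ξs b = lam/(lam+2*mu) := by
      have : ∑ b, lam/((lam+2*mu)*s^2) * ξ b * ξs b
          = lam/((lam+2*mu)*s^2) * ∑ b, ξ b * ξs b := by
        rw [Finset.mul_sum]
        exact Finset.sum_congr rfl (fun b _ => by ring)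
      rw [this, hsum]
      field_simp
      try ring
    calc v ⬝ᵥ u = ((∑ b, lam/((lam+2*mu)*s^2) * ξ b * ξs b : ℝ) : ℂ) := by
          simp only [dotProduct, hu, hv]
          push_cast
          exact Finset.sum_congr rfl (fun b _ => by ring)
      _ = _ := by rw [hreal]
  have hdetS : (T - B * D' * C).det = ((mu*s : ℝ) : ℂ)^(m+1) * (1 + ((lam/(lam+2*mu) : ℝ) : ℂ)) := by
    rw [hSchur, Matrix.det_smul, Matrix.det_one_add_replicateCol_mul_replicateRow, Fintype.card_fin, hvu]
  have hdetval : (p1mat (m+2) ξ ξs s lam mu al).det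
      = ((4 * al * mu^(m+2) * ((lam + mu)/(lam + 3*mu)) * s^(m+2+1) : ℝ) : ℂ) := by
    rw [hdet1, hdet2, hdetD, hdetS]
    have key : d0 * (al*s) * ((mu*s)^(m+1) * (1 + lam/(lam+2*mu)))
        = 4 * al * mu^(m+2) * ((lam + mu)/(lam + 3*mu)) * s^(m+2+1) := by
      rw [hd0]
      field_simp
      ring
    rw [← key]
    push_cast
    ring
  refine ⟨hdetval, ?_⟩
  rw [Matrix.isUnit_iff_isUnit_det, hdetval, isUnit_iff_ne_zero, Ne, Complex.ofReal_eq_zero]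
  constructor
  · intro hne hlm0
    apply hne
    rw [hlm0]
    simp
  · intro h hzero
    have h4 : (4:ℝ) * al * mu^(m+2) ≠ 0 := by positivity
    have h5 : s^(m+2+1) ≠ 0 := by positivity
    exact (mul_ne_zero (mul_ne_zero h4 (div_ne_zero h h3.ne')) h5) hzero
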